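/- Let μ₁, μ₂ ∈ C[0,1] and 0 < σ₁ ≤ σ₂ with σ₁ > σ₂/2. Then the L₁ distance between the mixture densities satisfies ‖f_{μ₁,σ₁} − f_{μ₂,σ₂}‖₁ ≤ √(2/π) · ‖μ₁ − μ₂‖_∞/σ₁ + 3(σ₂ − σ₁)/σ₁. -/

import Mathlib

open MeasureTheory Real Set

/-- Gaussian density with mean 0 and standard deviation σ. -/
noncomputable def gauss (σ t : ℝ) : ℝ :=
  (Real.sqrt (2 * Real.pi) * σ)⁻¹ * Real.exp (-(t ^ 2) / (2 * σ ^ 2))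

/-- NL-LVM mixture density with transfer function μ and bandwidth σ. -/
noncomputable def mixDens (μ : ℝ → ℝ) (σ : ℝ) (y : ℝ) : ℝ :=
  ∫ x in Set.Icc (0 : ℝ) 1, gauss σ (y - μ x)


lemma gauss_nonneg {σ : ℝ} (hσ : 0 < σ) (t : ℝ) : 0 ≤ gauss σ t := by
  unfold gauss
  have h : (0:ℝ) < Real.sqrt (2 * Real.pi) * σ := by
    have := Real.pi_pos; positivity
  positivity

lemma gauss_le_zero {σ : ℝ} (hσ : 0 < σ) {s t : ℝ} (h : s ^ 2 ≤ t ^ 2) :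
    gauss σ t ≤ gauss σ s := by
  unfold gauss
  have h1 : (0:ℝ) ≤ (Real.sqrt (2 * Real.pi) * σ)⁻¹ := by
    have := Real.pi_pos; positivity
  have h2 : Real.exp (-(t ^ 2) / (2 * σ ^ 2)) ≤ Real.exp (-(s ^ 2) / (2 * σ ^ 2)) := by
    apply Real.exp_le_exp.2
    have hpos : (0:ℝ) < 2 * σ ^ 2 := by positivity
    exact (div_le_div_iff_of_pos_right hpos).mpr (by linarith)
  exact mul_le_mul_of_nonneg_left h2 h1

lemma gauss_le_peak {σ : ℝ} (hσ : 0 < σ) (t : ℝ) : gauss σ t ≤ gauss σ 0 :=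
  gauss_le_zero hσ (by nlinarith [sq_nonneg t])

lemma gauss_eq {σ : ℝ} (t : ℝ) : gauss σ t =
    (Real.sqrt (2 * Real.pi) * σ)⁻¹ * Real.exp (-(1 / (2 * σ ^ 2)) * t ^ 2) := by
  unfold gauss; congr 1; ring_nf

lemma integrable_gauss {σ : ℝ} (hσ : 0 < σ) : Integrable (gauss σ) := by
  have hb : (0:ℝ) < 1 / (2 * σ ^ 2) := by positivity
  have := (integrable_exp_neg_mul_sq hb).const_mul ((Real.sqrt (2 * Real.pi) * σ)⁻¹)
  exact this.congr (Filter.Eventually.of_forall fun t => (gauss_eq t).symm)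

lemma integral_gauss {σ : ℝ} (hσ : 0 < σ) : ∫ t, gauss σ t = 1 := by
  have hb : (0:ℝ) < 1 / (2 * σ ^ 2) := by positivity
  have hpi := Real.pi_pos
  simp_rw [gauss_eq]
  rw [integral_const_mul, integral_gaussian]
  rw [show Real.pi / (1 / (2 * σ ^ 2)) = (2 * Real.pi) * σ ^ 2 by field_simp]
  rw [Real.sqrt_mul (by positivity : (0:ℝ) ≤ 2 * Real.pi) (σ ^ 2), Real.sqrt_sq hσ.le]
  field_simp

lemma integrable_gauss_shift {σ : ℝ} (hσ : 0 < σ) (a : ℝ) :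
    Integrable (fun y => gauss σ (y - a)) := (integrable_gauss hσ).comp_sub_right a

lemma integral_gauss_shift {σ : ℝ} (hσ : 0 < σ) (a : ℝ) :
    ∫ y, gauss σ (y - a) = 1 := by
  rw [integral_sub_right_eq_self (gauss σ) a]; exact integral_gauss hσ

lemma setIntegral_Iic_comp_sub (f : ℝ → ℝ) (c d : ℝ) :
    ∫ y in Iic c, f (y - d) = ∫ y in Iic (c - d), f y := by
  have h := integral_sub_right_eq_self (μ := volume)
    (fun y => (Set.Iic (c - d)).indicator f y) d
  rw [integral_indicator measurableSet_Iic] at h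
  rw [← h, ← integral_indicator measurableSet_Iic]
  congr 1 with y
  simp only [Set.indicator_apply, mem_Iic, sub_le_sub_iff_right]

lemma gauss_L1_shift_le {σ : ℝ} (hσ : 0 < σ) {a b : ℝ} (hab : a ≤ b) :
    ∫ y, |gauss σ (y - a) - gauss σ (y - b)| ≤ Real.sqrt (2 / Real.pi) * (b - a) / σ := by
  set c : ℝ := (a + b) / 2 with hc
  have ia := integrable_gauss_shift hσ a
  have ib := integrable_gauss_shift hσ b
  have habs : Integrable (fun y => |gauss σ (y - a) - gauss σ (y - b)|) := (ia.sub ib).abs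
  have hsign1 : ∀ y ∈ Iic c, |gauss σ (y - a) - gauss σ (y - b)|
      = gauss σ (y - a) - gauss σ (y - b) := by
    intro y hy
    simp only [mem_Iic] at hy
    exact abs_of_nonneg (sub_nonneg.2 (gauss_le_zero hσ (by nlinarith)))
  have hsign2 : ∀ y ∈ Ioi c, |gauss σ (y - a) - gauss σ (y - b)|
      = gauss σ (y - b) - gauss σ (y - a) := by
    intro y hy
    simp only [mem_Ioi] at hy
    rw [abs_sub_comm]
    exact abs_of_nonneg (sub_nonneg.2 (gauss_le_zero hσ (by nlinarith)))
  have key : ∫ y in Iic c, gauss σ (y - b) = ∫ y in Iic (c - (b - a)), gauss σ (y - a) := by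
    have : ∀ y : ℝ, gauss σ (y - b) = (fun z => gauss σ (z - a)) (y - (b - a)) := by
      intro y; simp only; ring_nf
    simp_rw [this]
    exact setIntegral_Iic_comp_sub (fun z => gauss σ (z - a)) c (b - a)
  have split := intervalIntegral.integral_Iic_add_Ioi (b := c) habs.integrableOn habs.integrableOn
  have e1 : ∫ y in Iic c, |gauss σ (y - a) - gauss σ (y - b)|
      = (∫ y in Iic c, gauss σ (y - a)) - ∫ y in Iic c, gauss σ (y - b) := by
    rw [setIntegral_congr_fun measurableSet_Iic hsign1,
      integral_sub ia.integrableOn ib.integrableOn]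
  have e2 : ∫ y in Ioi c, |gauss σ (y - a) - gauss σ (y - b)|
      = (∫ y in Iic c, gauss σ (y - a)) - ∫ y in Iic c, gauss σ (y - b) := by
    rw [setIntegral_congr_fun measurableSet_Ioi hsign2,
      integral_sub ib.integrableOn ia.integrableOn]
    have ta := intervalIntegral.integral_Iic_add_Ioi (b := c) ia.integrableOn ia.integrableOn
    have tb := intervalIntegral.integral_Iic_add_Ioi (b := c) ib.integrableOn ib.integrableOn
    have va : ∫ y, gauss σ (y - a) = 1 := integral_gauss_shift hσ a
    have vb : ∫ y, gauss σ (y - b) = 1 := integral_gauss_shift hσ b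
    linarith
  have diffbound : (∫ y in Iic c, gauss σ (y - a)) - (∫ y in Iic c, gauss σ (y - b))
      ≤ (b - a) * gauss σ 0 := by
    rw [key, intervalIntegral.integral_Iic_sub_Iic (ia.integrableOn) (ia.integrableOn),
      intervalIntegral.integral_of_le (by linarith : c - (b - a) ≤ c)]
    calc ∫ y in Ioc (c - (b - a)) c, gauss σ (y - a)
        ≤ ∫ _ in Ioc (c - (b - a)) c, gauss σ 0 := by
          apply setIntegral_mono_on ia.integrableOn (integrableOn_const ?_)
            measurableSet_Ioc (fun y _ => gauss_le_peak hσ _)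
          simp [Real.volume_Ioc]
      _ = (b - a) * gauss σ 0 := by
          rw [setIntegral_const, measureReal_def, Real.volume_Ioc, smul_eq_mul]
          rw [ENNReal.toReal_ofReal (by linarith)]
          ring_nf
  have peak : gauss σ 0 = (Real.sqrt (2 * Real.pi) * σ)⁻¹ := by
    unfold gauss; norm_num
  have keyval : 2 * (Real.sqrt (2 * Real.pi) * σ)⁻¹ = Real.sqrt (2 / Real.pi) / σ := by
    have hpi := Real.pi_pos
    have h2 : Real.sqrt (2 / Real.pi) * Real.sqrt (2 * Real.pi) = 2 := by
      rw [← Real.sqrt_mul (by positivity)]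
      rw [show 2 / Real.pi * (2 * Real.pi) = 4 by field_simp; ring]
      rw [show (4:ℝ) = 2 ^ 2 by norm_num, Real.sqrt_sq (by norm_num)]
    have hs : (0:ℝ) < Real.sqrt (2 * Real.pi) := Real.sqrt_pos.2 (by positivity)
    have h3 : Real.sqrt (2 / Real.pi) = 2 / Real.sqrt (2 * Real.pi) := by
      rw [eq_div_iff hs.ne']; exact h2
    rw [h3, div_div, ← div_eq_mul_inv]
  calc ∫ y, |gauss σ (y - a) - gauss σ (y - b)|
      = (∫ y in Iic c, |gauss σ (y - a) - gauss σ (y - b)|)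
        + ∫ y in Ioi c, |gauss σ (y - a) - gauss σ (y - b)| := split.symm
    _ = 2 * ((∫ y in Iic c, gauss σ (y - a)) - ∫ y in Iic c, gauss σ (y - b)) := by
        rw [e1, e2]; ring
    _ ≤ 2 * ((b - a) * gauss σ 0) := by linarith [diffbound]
    _ = Real.sqrt (2 / Real.pi) * (b - a) / σ := by
        rw [peak]
        rw [show 2 * ((b - a) * (Real.sqrt (2 * Real.pi) * σ)⁻¹)
          = (b - a) * (2 * (Real.sqrt (2 * Real.pi) * σ)⁻¹) by ring, keyval]
        ring

lemma gauss_L1_shift {σ : ℝ} (hσ : 0 < σ) (a b : ℝ) :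
    ∫ y, |gauss σ (y - a) - gauss σ (y - b)| ≤ Real.sqrt (2 / Real.pi) * |a - b| / σ := by
  rcases le_total a b with hab | hab
  · rw [abs_sub_comm, abs_of_nonneg (by linarith)]
    exact gauss_L1_shift_le hσ hab
  · rw [abs_of_nonneg (by linarith)]
    calc ∫ y, |gauss σ (y - a) - gauss σ (y - b)|
        = ∫ y, |gauss σ (y - b) - gauss σ (y - a)| := by simp_rw [abs_sub_comm]
      _ ≤ Real.sqrt (2 / Real.pi) * (a - b) / σ := gauss_L1_shift_le hσ hab

lemma gauss_L1_sigma {σ₁ σ₂ : ℝ} (h1 : 0 < σ₁) (h12 : σ₁ ≤ σ₂) :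
    ∫ t, |gauss σ₁ t - gauss σ₂ t| ≤ 2 * (σ₂ - σ₁) / σ₁ := by
  have h2 : 0 < σ₂ := lt_of_lt_of_le h1 h12
  have hpi := Real.pi_pos
  have i1 := integrable_gauss h1
  have i2 := integrable_gauss h2
  have ih : Integrable (fun t => (σ₁ / σ₂) * gauss σ₁ t) := i1.const_mul _
  -- pointwise middle function below g₂
  have hmid : ∀ t, (σ₁ / σ₂) * gauss σ₁ t ≤ gauss σ₂ t := by
    intro t
    unfold gauss
    have hc : σ₁ / σ₂ * (Real.sqrt (2 * Real.pi) * σ₁)⁻¹ = (Real.sqrt (2 * Real.pi) * σ₂)⁻¹ := by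
      have hs : (0:ℝ) < Real.sqrt (2 * Real.pi) := Real.sqrt_pos.2 (by positivity)
      field_simp
    rw [← mul_assoc, hc]
    have hexp : Real.exp (-(t ^ 2) / (2 * σ₁ ^ 2)) ≤ Real.exp (-(t ^ 2) / (2 * σ₂ ^ 2)) := by
      apply Real.exp_le_exp.2
      rw [neg_div, neg_div, neg_le_neg_iff]
      apply div_le_div_of_nonneg_left (by positivity) (by positivity)
      nlinarith
    have : (0:ℝ) ≤ (Real.sqrt (2 * Real.pi) * σ₂)⁻¹ := by positivity
    exact mul_le_mul_of_nonneg_left hexp this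
  have habs1 : ∀ t, |gauss σ₁ t - (σ₁ / σ₂) * gauss σ₁ t| = (1 - σ₁ / σ₂) * gauss σ₁ t := by
    intro t
    rw [show gauss σ₁ t - (σ₁ / σ₂) * gauss σ₁ t = (1 - σ₁ / σ₂) * gauss σ₁ t by ring]
    exact abs_of_nonneg (mul_nonneg (by
      have : σ₁ / σ₂ ≤ 1 := (div_le_one h2).2 h12
      linarith) (gauss_nonneg h1 t))
  have habs2 : ∀ t, |(σ₁ / σ₂) * gauss σ₁ t - gauss σ₂ t|
      = gauss σ₂ t - (σ₁ / σ₂) * gauss σ₁ t := by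
    intro t; rw [abs_sub_comm]; exact abs_of_nonneg (sub_nonneg.2 (hmid t))
  calc ∫ t, |gauss σ₁ t - gauss σ₂ t|
      ≤ ∫ t, (|gauss σ₁ t - (σ₁ / σ₂) * gauss σ₁ t|
          + |(σ₁ / σ₂) * gauss σ₁ t - gauss σ₂ t|) := by
        refine integral_mono (i1.sub i2).abs (((i1.sub ih).abs).add ((ih.sub i2).abs))
          fun t => abs_sub_le _ _ _
    _ = (∫ t, |gauss σ₁ t - (σ₁ / σ₂) * gauss σ₁ t|)
        + ∫ t, |(σ₁ / σ₂) * gauss σ₁ t - gauss σ₂ t| :=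
        integral_add ((i1.sub ih).abs) ((ih.sub i2).abs)
    _ = (1 - σ₁ / σ₂) + (1 - σ₁ / σ₂) := by
        congr 1
        · simp_rw [habs1]
          rw [integral_const_mul, integral_gauss h1, mul_one]
        · simp_rw [habs2]
          rw [integral_sub i2 ih, integral_const_mul, integral_gauss h1, integral_gauss h2]
          ring
    _ ≤ 2 * (σ₂ - σ₁) / σ₁ := by
        have e : (1 - σ₁ / σ₂) + (1 - σ₁ / σ₂) = 2 * (σ₂ - σ₁) / σ₂ := by field_simp; ring
        rw [e]
        gcongr


lemma finite_restrict : IsFiniteMeasure (volume.restrict (Set.Icc (0:ℝ) 1)) :=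
  ⟨by rw [Measure.restrict_apply_univ]; simp [Real.volume_Icc]⟩

lemma integrable_prod_gauss (μ : ℝ → ℝ) (hμ : ContinuousOn μ (Set.Icc 0 1)) {σ : ℝ}
    (hσ : 0 < σ) :
    Integrable (fun p : ℝ × ℝ => gauss σ (p.2 - μ p.1))
      ((volume.restrict (Set.Icc (0:ℝ) 1)).prod volume) := by
  have := finite_restrict
  have hgc : Continuous (gauss σ) := by
    unfold gauss
    exact continuous_const.mul (Real.continuous_exp.comp (by continuity))
  have hmeas : AEStronglyMeasurable (fun p : ℝ × ℝ => gauss σ (p.2 - μ p.1))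
      ((volume.restrict (Set.Icc (0:ℝ) 1)).prod volume) := by
    have hcont : ContinuousOn (fun p : ℝ × ℝ => gauss σ (p.2 - μ p.1))
        (Set.Icc (0:ℝ) 1 ×ˢ (Set.univ : Set ℝ)) := by
      apply hgc.comp_continuousOn
      exact (continuous_snd.continuousOn).sub
        (hμ.comp continuous_fst.continuousOn (fun p hp => hp.1))
    have h := hcont.aestronglyMeasurable (μ := (volume : Measure (ℝ × ℝ)))
      (measurableSet_Icc.prod MeasurableSet.univ)
    rwa [Measure.volume_eq_prod, ← Measure.prod_restrict, Measure.restrict_univ] at h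
  rw [integrable_prod_iff hmeas]
  constructor
  · exact Filter.Eventually.of_forall fun x => integrable_gauss_shift hσ (μ x)
  · have heq : (fun x => ∫ y, ‖gauss σ (y - μ x)‖) = fun _ => (1:ℝ) := by
      funext x
      simp_rw [Real.norm_eq_abs, abs_of_nonneg (gauss_nonneg hσ _)]
      exact integral_gauss_shift hσ (μ x)
    rw [heq]
    exact integrable_const 1

lemma L1_mix (F : ℝ × ℝ → ℝ)
    (hF : Integrable F ((volume.restrict (Set.Icc (0:ℝ) 1)).prod volume)) :
    ∫ y, |∫ x in Set.Icc (0:ℝ) 1, F (x, y)|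
      ≤ ∫ x in Set.Icc (0:ℝ) 1, ∫ y, |F (x, y)| := by
  have h1 : Integrable (fun y => ∫ x in Set.Icc (0:ℝ) 1, F (x, y)) volume :=
    hF.integral_prod_right
  have h2 : Integrable (fun y => ∫ x in Set.Icc (0:ℝ) 1, |F (x, y)|) volume := by
    have := hF.integral_norm_prod_right
    simpa [Real.norm_eq_abs] using this
  calc ∫ y, |∫ x in Set.Icc (0:ℝ) 1, F (x, y)|
      ≤ ∫ y, ∫ x in Set.Icc (0:ℝ) 1, |F (x, y)| := by
        refine integral_mono h1.abs h2 fun y => ?_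
        simpa [Real.norm_eq_abs] using
          norm_integral_le_integral_norm (μ := volume.restrict (Set.Icc (0:ℝ) 1))
            (fun x => F (x, y))
    _ = ∫ x in Set.Icc (0:ℝ) 1, ∫ y, |F (x, y)| := by
        refine (integral_integral_swap (f := fun x y => |F (x, y)|) ?_).symm
        have := hF.norm
        exact (by simpa [Real.norm_eq_abs] using this : Integrable (fun a => |F a|) _)

lemma gauss_comp_integrableOn (μ : ℝ → ℝ) (hμ : ContinuousOn μ (Set.Icc 0 1)) {σ : ℝ}
    (y : ℝ) : IntegrableOn (fun x => gauss σ (y - μ x)) (Set.Icc (0:ℝ) 1) := by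
  have hgc : Continuous (gauss σ) := by
    unfold gauss
    exact continuous_const.mul (Real.continuous_exp.comp (by continuity))
  exact (hgc.comp_continuousOn (continuousOn_const.sub hμ)).integrableOn_compact isCompact_Icc


/-- L₁ distance bound between two NL-LVM mixture densities with
nearby bandwidths. -/
theorem stmt_7 (μ₁ μ₂ : ℝ → ℝ) (hμ₁ : ContinuousOn μ₁ (Set.Icc 0 1))
    (hμ₂ : ContinuousOn μ₂ (Set.Icc 0 1)) (σ₁ σ₂ : ℝ)
    (hσ₁ : 0 < σ₁) (h12 : σ₁ ≤ σ₂) (hhalf : σ₂ / 2 < σ₁) :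
    ∫ y, |mixDens μ₁ σ₁ y - mixDens μ₂ σ₂ y|
      ≤ Real.sqrt (2 / Real.pi) * (⨆ x : Set.Icc (0 : ℝ) 1, |μ₁ x - μ₂ x|) / σ₁
        + 3 * (σ₂ - σ₁) / σ₁ := by
  have hσ₂ : 0 < σ₂ := lt_of_lt_of_le hσ₁ h12
  set M : ℝ := ⨆ x : Set.Icc (0 : ℝ) 1, |μ₁ x - μ₂ x| with hMdef
  have hsub : ContinuousOn (fun x => |μ₁ x - μ₂ x|) (Set.Icc 0 1) := (hμ₁.sub hμ₂).abs
  have hbdd : BddAbove (Set.range fun x : Set.Icc (0:ℝ) 1 => |μ₁ x.1 - μ₂ x.1|) := by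
    have h := (isCompact_Icc.image_of_continuousOn hsub).bddAbove
    rw [Set.image_eq_range] at h
    exact h
  have hMx : ∀ x ∈ Set.Icc (0:ℝ) 1, |μ₁ x - μ₂ x| ≤ M := fun x hx => le_ciSup hbdd ⟨x, hx⟩
  have hM0 : 0 ≤ M := le_trans (abs_nonneg _) (hMx 0 (by norm_num))
  have hsqrt : (0:ℝ) ≤ Real.sqrt (2 / Real.pi) := Real.sqrt_nonneg _
  -- product integrability
  have hF1 := integrable_prod_gauss μ₁ hμ₁ hσ₁
  have hF2 := integrable_prod_gauss μ₂ hμ₂ hσ₁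
  have hF3 := integrable_prod_gauss μ₂ hμ₂ hσ₂
  have hA : Integrable (mixDens μ₁ σ₁) := hF1.integral_prod_right
  have hB : Integrable (mixDens μ₂ σ₁) := hF2.integral_prod_right
  have hC : Integrable (mixDens μ₂ σ₂) := hF3.integral_prod_right
  -- Term 1
  have T1 : ∫ y, |mixDens μ₁ σ₁ y - mixDens μ₂ σ₁ y|
      ≤ Real.sqrt (2 / Real.pi) * M / σ₁ := by
    have hdiff : ∀ y, mixDens μ₁ σ₁ y - mixDens μ₂ σ₁ y
        = ∫ x in Set.Icc (0:ℝ) 1, (gauss σ₁ (y - μ₁ x) - gauss σ₁ (y - μ₂ x)) := fun y =>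
      (integral_sub (gauss_comp_integrableOn μ₁ hμ₁ y)
        (gauss_comp_integrableOn μ₂ hμ₂ y)).symm
    have hFd := hF1.sub hF2
    calc ∫ y, |mixDens μ₁ σ₁ y - mixDens μ₂ σ₁ y|
        = ∫ y, |∫ x in Set.Icc (0:ℝ) 1,
            ((fun p : ℝ × ℝ => gauss σ₁ (p.2 - μ₁ p.1) - gauss σ₁ (p.2 - μ₂ p.1)) (x, y))| := by
          simp_rw [hdiff]
      _ ≤ ∫ x in Set.Icc (0:ℝ) 1, ∫ y, |gauss σ₁ (y - μ₁ x) - gauss σ₁ (y - μ₂ x)| :=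
          L1_mix _ hFd
      _ ≤ ∫ _x in Set.Icc (0:ℝ) 1, (Real.sqrt (2 / Real.pi) * M / σ₁) := by
          apply setIntegral_mono_on ?_ ?_ measurableSet_Icc ?_
          · have := hFd.integral_norm_prod_left
            simpa [Real.norm_eq_abs, IntegrableOn] using this
          · exact integrableOn_const (by simp [Real.volume_Icc])
          · intro x hx
            refine (gauss_L1_shift hσ₁ (μ₁ x) (μ₂ x)).trans ?_
            gcongr
            exact hMx x hx
      _ = Real.sqrt (2 / Real.pi) * M / σ₁ := by
          rw [setIntegral_const, measureReal_def, Real.volume_Icc, smul_eq_mul]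
          norm_num
  -- Term 2
  have T2 : ∫ y, |mixDens μ₂ σ₁ y - mixDens μ₂ σ₂ y| ≤ 2 * (σ₂ - σ₁) / σ₁ := by
    have hdiff : ∀ y, mixDens μ₂ σ₁ y - mixDens μ₂ σ₂ y
        = ∫ x in Set.Icc (0:ℝ) 1, (gauss σ₁ (y - μ₂ x) - gauss σ₂ (y - μ₂ x)) := fun y =>
      (integral_sub (gauss_comp_integrableOn μ₂ hμ₂ y)
        (gauss_comp_integrableOn μ₂ hμ₂ y)).symm
    have hFd := hF2.sub hF3
    have inner : ∀ x : ℝ, ∫ y, |gauss σ₁ (y - μ₂ x) - gauss σ₂ (y - μ₂ x)|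
        ≤ 2 * (σ₂ - σ₁) / σ₁ := by
      intro x
      have := integral_sub_right_eq_self (μ := volume)
        (fun t => |gauss σ₁ t - gauss σ₂ t|) (μ₂ x)
      rw [this]
      exact gauss_L1_sigma hσ₁ h12
    calc ∫ y, |mixDens μ₂ σ₁ y - mixDens μ₂ σ₂ y|
        = ∫ y, |∫ x in Set.Icc (0:ℝ) 1,
            ((fun p : ℝ × ℝ => gauss σ₁ (p.2 - μ₂ p.1) - gauss σ₂ (p.2 - μ₂ p.1)) (x, y))| := by
          simp_rw [hdiff]
      _ ≤ ∫ x in Set.Icc (0:ℝ) 1, ∫ y, |gauss σ₁ (y - μ₂ x) - gauss σ₂ (y - μ₂ x)| :=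
          L1_mix _ hFd
      _ ≤ ∫ _x in Set.Icc (0:ℝ) 1, (2 * (σ₂ - σ₁) / σ₁) := by
          apply setIntegral_mono_on ?_ ?_ measurableSet_Icc (fun x _ => inner x)
          · have := hFd.integral_norm_prod_left
            simpa [Real.norm_eq_abs, IntegrableOn] using this
          · exact integrableOn_const (by simp [Real.volume_Icc])
      _ = 2 * (σ₂ - σ₁) / σ₁ := by
          rw [setIntegral_const, measureReal_def, Real.volume_Icc, smul_eq_mul]
          norm_num
  -- triangle inequality
  calc ∫ y, |mixDens μ₁ σ₁ y - mixDens μ₂ σ₂ y|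
      ≤ ∫ y, (|mixDens μ₁ σ₁ y - mixDens μ₂ σ₁ y|
          + |mixDens μ₂ σ₁ y - mixDens μ₂ σ₂ y|) :=
        integral_mono ((hA.sub hC).abs) (((hA.sub hB).abs).add ((hB.sub hC).abs))
          (fun y => abs_sub_le _ _ _)
    _ = (∫ y, |mixDens μ₁ σ₁ y - mixDens μ₂ σ₁ y|)
        + ∫ y, |mixDens μ₂ σ₁ y - mixDens μ₂ σ₂ y| :=
        integral_add ((hA.sub hB).abs) ((hB.sub hC).abs)
    _ ≤ Real.sqrt (2 / Real.pi) * M / σ₁ + 2 * (σ₂ - σ₁) / σ₁ := add_le_add T1 T2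
    _ ≤ Real.sqrt (2 / Real.pi) * M / σ₁ + 3 * (σ₂ - σ₁) / σ₁ := by
        have h0 : 0 ≤ (σ₂ - σ₁) / σ₁ := div_nonneg (by linarith) hσ₁.le
        have : 2 * ((σ₂ - σ₁) / σ₁) ≤ 3 * ((σ₂ - σ₁) / σ₁) := by linarith
        calc Real.sqrt (2 / Real.pi) * M / σ₁ + 2 * (σ₂ - σ₁) / σ₁
            = Real.sqrt (2 / Real.pi) * M / σ₁ + 2 * ((σ₂ - σ₁) / σ₁) := by ring
          _ ≤ Real.sqrt (2 / Real.pi) * M / σ₁ + 3 * ((σ₂ - σ₁) / σ₁) := by linarith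
          _ = Real.sqrt (2 / Real.pi) * M / σ₁ + 3 * (σ₂ - σ₁) / σ₁ := by ring
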